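/- For every μ with 1/2 < μ < 1, the commuter h_μ satisfies h_μ(μ) ≠ 1. -/
import Mathlib


open Set

/-- `h : [0,1] → [0,1]` satisfies the commuter functional equation for `T_μ`:
`h(x) = (1/2)·h(2μx)` for `0 ≤ x ≤ 1/2` and `h(x) = 1 - (1/2)·h(2μ(1-x))` for `1/2 < x ≤ 1`. -/
def IsCommuter (μ : ℝ) (h : ℝ → ℝ) : Prop :=
  (∀ x ∈ Icc (0:ℝ) 1, h x ∈ Icc (0:ℝ) 1) ∧
  (∀ x : ℝ, 0 ≤ x → x ≤ 1/2 → h x = (1/2) * h (2*μ*x)) ∧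
  (∀ x : ℝ, 1/2 < x → x ≤ 1 → h x = 1 - (1/2) * h (2*μ*(1-x)))

/-- For `1/2 < μ < 1`, the commuter satisfies `h_μ(μ) ≠ 1`. -/
theorem commuter_apply_ne_one (μ : ℝ) (hμ1 : 1/2 < μ) (hμ2 : μ < 1)
    (h : ℝ → ℝ) (hc : IsCommuter μ h) :
    h μ ≠ 1 := by
  obtain ⟨hmem, hL, hR⟩ := hc
  have h2μ : 1 < 2*μ := by linarith
  have key : ∀ n : ℕ, ∀ x : ℝ, 0 < x → x ≤ 1 → 1/2 < (2*μ)^n * x → h x ≠ 0 := by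
    intro n
    induction n with
    | zero =>
      intro x hx0 hx1 hx2
      simp only [pow_zero, one_mul] at hx2
      have heq := hR x hx2 hx1
      have hy0 : (0:ℝ) ≤ 2*μ*(1-x) := by nlinarith
      have hy1 : 2*μ*(1-x) ≤ 1 := by nlinarith
      have hb := (hmem _ ⟨hy0, hy1⟩).2
      intro h0
      rw [heq] at h0
      linarith
    | succ n ih =>
      intro x hx0 hx1 hxn
      by_cases hhalf : 1/2 < x
      · have heq := hR x hhalf hx1
        have hy0 : (0:ℝ) ≤ 2*μ*(1-x) := by nlinarith
        have hy1 : 2*μ*(1-x) ≤ 1 := by nlinarith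
        have hb := (hmem _ ⟨hy0, hy1⟩).2
        intro h0
        rw [heq] at h0
        linarith
      · push_neg at hhalf
        have heq := hL x hx0.le hhalf
        intro h0
        have hy0 : 0 < 2*μ*x := by nlinarith
        have hy1 : 2*μ*x ≤ 1 := by nlinarith
        have hyn : 1/2 < (2*μ)^n * (2*μ*x) := by
          have : (2*μ)^n * (2*μ*x) = (2*μ)^(n+1) * x := by ring
          rw [this]; exact hxn
        have := ih (2*μ*x) hy0 hy1 hyn
        apply this
        rw [heq] at h0
        linarith
  intro heq
  set y := 2*μ*(1-μ) with hy
  have hy0 : 0 < y := by nlinarith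
  have hy1 : y ≤ 1 := by nlinarith
  have hμeq := hR μ hμ1 hμ2.le
  have hzero : h y = 0 := by rw [hμeq] at heq; linarith
  obtain ⟨n, hn⟩ := pow_unbounded_of_one_lt ((1/2)/y) h2μ
  have hlt : 1/2 < (2*μ)^n * y := by
    rw [div_lt_iff₀ hy0] at hn
    linarith
  exact key n y hy0 hy1 hlt hzero
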